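/- Let X be a path-connected topological space and x ∈ X. Then π₁^qs(X, x) = 1 if and only if there are no non-homotopic paths f, g : [0,1] → X with f(0) = g(0), f(1) = g(1), and f homotopically close to g rel ∂I; that is, π₁^qs(X, x) = 1 if and only if whenever a path f is homotopically close rel ∂I to a path g with the same endpoints, f is homotopic to g rel ∂I. -/

import Mathlib

open unitInterval

noncomputable section

attribute [local instance] Path.Homotopic.setoid

variable {X Y : Type*} [TopologicalSpace X] [TopologicalSpace Y]

/-- `HClose f g` : the path `f` is homotopically close to the path `g` rel `∂I`:
for every partition `0 = t₀ < t₁ < ⋯ < tₙ = 1` and every sequence of open sets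
`U₁, …, Uₙ` with `g [tᵢ₋₁, tᵢ] ⊆ Uᵢ`, there is a path `γ`, homotopic to `f` rel `∂I`,
with `γ [tᵢ₋₁, tᵢ] ⊆ Uᵢ` and `γ tᵢ = g tᵢ` for all `i`. -/
def HClose {a b : X} (f g : Path a b) : Prop :=
  ∀ (n : ℕ) (t : Fin (n + 1) → I), t 0 = 0 → t (Fin.last n) = 1 → StrictMono t →
    ∀ U : Fin n → Set X, (∀ i, IsOpen (U i)) →
      (∀ i : Fin n, g '' Set.Icc (t i.castSucc) (t i.succ) ⊆ U i) →
      ∃ γ : Path a b,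
        (∀ i : Fin n, γ '' Set.Icc (t i.castSucc) (t i.succ) ⊆ U i) ∧
        (∀ i : Fin (n + 1), γ (t i) = g (t i)) ∧ γ.Homotopic f

/-- The class of a loop at `x` as an element of the fundamental group. -/
def pathClass {x : X} (f : Path x x) : FundamentalGroup X x :=
  FundamentalGroup.fromPath ⟦f⟧

/-- The `H`-quasi-small loop set `π_H^qs(X, x)`. -/
def qsSet (x : X) (H : Set (FundamentalGroup X x)) : Set (FundamentalGroup X x) :=
  { p | ∃ f h : Path x x, pathClass f = p ∧ pathClass h ∈ H ∧ HClose f h }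

/-- The quasi-small loop group `π₁^qs(X, x)`. -/
def qs (x : X) : Set (FundamentalGroup X x) :=
  qsSet x (⊥ : Subgroup (FundamentalGroup X x))

/-- The Spanier group of `(X, x)` with respect to the cover `𝒰`. -/
def spanierCover (x : X) (𝒰 : Set (Set X)) : Subgroup (FundamentalGroup X x) :=
  Subgroup.closure { p | ∃ (y : X) (u : Path x y) (v : Path y y) (U : Set X),
    U ∈ 𝒰 ∧ Set.range v ⊆ U ∧ p = pathClass ((u.trans v).trans u.symm) }

/-- The (unbased) Spanier group `π₁^sp(X, x)`. -/
def spanierGroup (x : X) : Subgroup (FundamentalGroup X x) :=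
  ⨅ (𝒰 : Set (Set X)) (_ : ∀ U ∈ 𝒰, IsOpen U) (_ : ⋃₀ 𝒰 = Set.univ), spanierCover x 𝒰

/-- The small generated subgroup `π₁^sg(X, x)`. -/
def smallGenerated (x : X) : Subgroup (FundamentalGroup X x) :=
  Subgroup.closure { p | ∃ (y : X) (β : Path x y) (α : Path y y),
    HClose α (Path.refl y) ∧ p = pathClass ((β.trans α).trans β.symm) }

/-- `X` is homotopically path Hausdorff relative to `H ⊆ π₁(X, x)`. -/
def HPHausdorffRel (x : X) (H : Set (FundamentalGroup X x)) : Prop :=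
  ∀ (y : X) (α β : Path x y), pathClass (α.trans β.symm) ∉ H →
    ∃ (n : ℕ) (t : Fin (n + 1) → I), t 0 = 0 ∧ t (Fin.last n) = 1 ∧ StrictMono t ∧
      ∃ U : Fin n → Set X, (∀ i, IsOpen (U i)) ∧
        (∀ i : Fin n, α '' Set.Icc (t i.castSucc) (t i.succ) ⊆ U i) ∧
        ∀ γ : Path x y, (∀ i : Fin n, γ '' Set.Icc (t i.castSucc) (t i.succ) ⊆ U i) →
          (∀ i : Fin (n + 1), γ (t i) = α (t i)) → pathClass (γ.trans β.symm) ∉ H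

lemma path_congr {a b : X} {γ g : Path a b} {u v : I} (h : γ v = g v)
    (huv : (u : ℝ) = (v : ℝ)) : γ u = g u := by
  rw [show u = v from Subtype.ext huv]; exact h

lemma path_congr' {a b : X} (γ : Path a b) {u v : I} (huv : (u : ℝ) = (v : ℝ)) :
    γ u = γ v := congrArg γ (Subtype.ext huv)

lemma path_eq_target {a b : X} (γ : Path a b) {u : I} (hu : (u : ℝ) = 1) : γ u = b := by
  rw [show u = 1 from Subtype.ext (by simpa using hu)]; exact γ.target

set_option maxHeartbeats 800000 in
lemma HClose.trans' {a b c : X} {f₁ g₁ : Path a b} {f₂ g₂ : Path b c}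
    (h₁ : HClose f₁ g₁) (h₂ : HClose f₂ g₂) : HClose (f₁.trans f₂) (g₁.trans g₂) := by
  intro n t ht0 htl hmono U hUopen hUsub
  set tR : ℕ → ℝ := fun i => (t ⟨min i n, by omega⟩ : ℝ) with htRdef
  have htReq : ∀ (i : ℕ) (h : i < n + 1), tR i = (t ⟨i, h⟩ : ℝ) := by
    intro i h
    simp only [htRdef]
    exact congrArg (fun x => ((t x : I) : ℝ)) (Fin.ext (show min i n = i by omega))
  have htR0 : ∀ i, 0 ≤ tR i := fun i => (t _).2.1
  have htR1 : ∀ i, tR i ≤ 1 := fun i => (t _).2.2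
  have htRmono : Monotone tR := by
    intro i j hij
    exact Subtype.coe_le_coe.mpr (hmono.monotone (by simp only [Fin.mk_le_mk]; omega))
  have htRsmono : ∀ {i j : ℕ}, i < j → j ≤ n → tR i < tR j := by
    intro i j hij hj
    rw [htReq i (by omega), htReq j (by omega)]
    exact Subtype.coe_lt_coe.mpr (hmono (by simp only [Fin.mk_lt_mk]; omega))
  have htRn : tR n = 1 := by
    rw [htReq n (by omega), show (⟨n, by omega⟩ : Fin (n+1)) = Fin.last n from rfl, htl]
    simp
  have htR00 : tR 0 = 0 := by
    rw [htReq 0 (by omega), show (⟨0, by omega⟩ : Fin (n+1)) = 0 from Fin.ext (by simp), ht0]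
    simp
  -- the splitting indices
  have hex : ∃ i, (1:ℝ)/2 ≤ tR i := ⟨n, by rw [htRn]; norm_num⟩
  obtain ⟨k, hk_half, hk_lt⟩ : ∃ k, (1:ℝ)/2 ≤ tR k ∧ ∀ j < k, tR j < 1/2 :=
    ⟨Nat.find hex, Nat.find_spec hex, fun j hj => lt_of_not_ge (Nat.find_min hex hj)⟩
  have hk_pos : 0 < k := by
    rcases Nat.eq_zero_or_pos k with h | h
    · rw [h] at hk_half; rw [htR00] at hk_half; norm_num at hk_half
    · exact h
  have hk_le : k ≤ n := by
    by_contra h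
    have := hk_lt n (by omega)
    rw [htRn] at this; norm_num at this
  have hex2 : ∃ i, (1:ℝ)/2 < tR i := ⟨n, by rw [htRn]; norm_num⟩
  obtain ⟨p, hp_half, hp_le'⟩ : ∃ p, (1:ℝ)/2 < tR p ∧ ∀ j < p, tR j ≤ 1/2 :=
    ⟨Nat.find hex2, Nat.find_spec hex2, fun j hj => le_of_not_gt (Nat.find_min hex2 hj)⟩
  have hp_pos : 0 < p := by
    rcases Nat.eq_zero_or_pos p with h | h
    · rw [h, htR00] at hp_half; norm_num at hp_half
    · exact h
  have hp_le : p ≤ n := by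
    by_contra h
    have := hp_le' n (by omega)
    rw [htRn] at this; norm_num at this
  set m := n + 1 - p with hmdef
  have hm_pos : 0 < m := by omega
  have hpm : p - 1 + m = n := by omega
  -- left partition
  set s : Fin (k+1) → I := fun i =>
    if h : (i : ℕ) < k then
      ⟨2 * tR i, ⟨by have := htR0 (i:ℕ); linarith, by have := hk_lt i h; linarith⟩⟩
    else 1 with hsdef
  have hsval : ∀ (i : Fin (k+1)), (i : ℕ) < k → (s i : ℝ) = 2 * tR i := by
    intro i h; simp only [hsdef]; rw [dif_pos h]
  have hsval1 : ∀ (i : Fin (k+1)), ¬((i : ℕ) < k) → (s i : ℝ) = 1 := by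
    intro i h; simp only [hsdef]; rw [dif_neg h]; simp
  have hs0 : s 0 = 0 := by
    apply Subtype.ext
    rw [hsval 0 (by simpa using hk_pos)]
    simp [htR00]
  have hslast : s (Fin.last k) = 1 := by
    apply Subtype.ext
    rw [hsval1 (Fin.last k) (by simp)]
    simp
  have hsmono : StrictMono s := by
    intro i j hij
    have hij' : (i : ℕ) < (j : ℕ) := hij
    rw [← Subtype.coe_lt_coe]
    rcases lt_or_ge (j : ℕ) k with hj | hj
    · rw [hsval i (by omega), hsval j hj]
      have := htRsmono hij' (by omega)
      linarith
    · rw [hsval i (by omega), hsval1 j (by omega)]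
      have := hk_lt i (by omega)
      linarith
  set V : Fin k → Set X := fun i => U ⟨i, by have := i.2; omega⟩ with hVdef
  have hVsub : ∀ i : Fin k, g₁ '' Set.Icc (s i.castSucc) (s i.succ) ⊆ V i := by
    rintro i _ ⟨u, ⟨hu1, hu2⟩, rfl⟩
    have hl : 2 * tR i ≤ (u : ℝ) := by
      have h := Subtype.coe_le_coe.mpr hu1
      rwa [hsval i.castSucc (by simpa using i.2)] at h
    have key : g₁ u = (g₁.trans g₂)
        ⟨(u:ℝ)/2, ⟨by have := u.2.1; linarith, by have := u.2.2; linarith⟩⟩ := by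
      rw [Path.trans_apply, dif_pos (show (u:ℝ)/2 ≤ 1/2 by have := u.2.2; linarith)]
      exact path_congr' g₁ (show (u:ℝ) = 2 * ((u:ℝ)/2) by ring)
    rw [key]
    refine hUsub ⟨i, by have := i.2; omega⟩ ⟨_, ⟨?_, ?_⟩, rfl⟩
    · rw [← Subtype.coe_le_coe]
      have : (t (Fin.castSucc ⟨(i:ℕ), by have := i.2; omega⟩) : ℝ) = tR i := by
        rw [htReq (i:ℕ) (by have := i.2; omega)]
        rfl
      rw [this]
      show tR i ≤ (u:ℝ)/2
      linarith
    · rw [← Subtype.coe_le_coe]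
      have : (t (Fin.succ ⟨(i:ℕ), by have := i.2; omega⟩) : ℝ) = tR ((i:ℕ)+1) := by
        rw [htReq ((i:ℕ)+1) (by have := i.2; omega)]
        rfl
      rw [this]
      show (u:ℝ)/2 ≤ tR ((i:ℕ)+1)
      rcases lt_or_ge ((i:ℕ)+1) k with hik | hik
      · have h := Subtype.coe_le_coe.mpr hu2
        rw [hsval i.succ (by simpa using hik)] at h
        have : tR (i.succ : ℕ) = tR ((i:ℕ)+1) := by simp
        rw [this] at h
        linarith
      · have h1 : (1:ℝ)/2 ≤ tR ((i:ℕ)+1) := le_trans hk_half (htRmono (by omega))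
        have := u.2.2
        linarith
  obtain ⟨γ₁, hγ₁sub, hγ₁eq, hγ₁hom⟩ :=
    h₁ k s hs0 hslast hsmono V (fun i => hUopen _) hVsub
  -- right partition
  set r : Fin (m+1) → I := fun j =>
    if h : 0 < (j : ℕ) then
      ⟨2 * tR (p - 1 + j) - 1,
        ⟨by have := htRmono (show p ≤ p - 1 + (j:ℕ) by omega); linarith,
         by have := htR1 (p - 1 + (j:ℕ)); linarith⟩⟩
    else 0 with hrdef
  have hrval : ∀ (j : Fin (m+1)), 0 < (j : ℕ) → (r j : ℝ) = 2 * tR (p - 1 + j) - 1 := by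
    intro j h; simp only [hrdef]; rw [dif_pos h]
  have hrval0 : ∀ (j : Fin (m+1)), ¬(0 < (j : ℕ)) → (r j : ℝ) = 0 := by
    intro j h; simp only [hrdef]; rw [dif_neg h]; simp
  have hr0 : r 0 = 0 := by
    apply Subtype.ext
    rw [hrval0 0 (by simp)]
    simp
  have hrlast : r (Fin.last m) = 1 := by
    apply Subtype.ext
    rw [hrval (Fin.last m) (by simpa using hm_pos)]
    show 2 * tR (p - 1 + m) - 1 = ((1:I):ℝ)
    rw [hpm, htRn]
    norm_num
  have hrmono : StrictMono r := by
    intro i j hij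
    have hij' : (i : ℕ) < (j : ℕ) := hij
    rw [← Subtype.coe_lt_coe]
    rcases Nat.eq_zero_or_pos (i : ℕ) with hi | hi
    · rw [hrval0 i (by omega), hrval j (by omega)]
      have := lt_of_lt_of_le hp_half (htRmono (show p ≤ p - 1 + (j:ℕ) by omega))
      linarith
    · rw [hrval i hi, hrval j (by omega)]
      have := htRsmono (show p - 1 + (i:ℕ) < p - 1 + (j:ℕ) by omega)
        (show p - 1 + (j:ℕ) ≤ n by have := j.2; omega)
      linarith
  set W : Fin m → Set X := fun j => U ⟨p - 1 + j, by have := j.2; omega⟩ with hWdef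
  have hWsub : ∀ j : Fin m, g₂ '' Set.Icc (r j.castSucc) (r j.succ) ⊆ W j := by
    rintro j _ ⟨u, ⟨hu1, hu2⟩, rfl⟩
    have hup : (u:ℝ) ≤ 2 * tR (p - 1 + ((j:ℕ)+1)) - 1 := by
      have h := Subtype.coe_le_coe.mpr hu2
      rw [hrval j.succ (by simp)] at h
      have : tR (p - 1 + (j.succ : ℕ)) = tR (p - 1 + ((j:ℕ)+1)) := by simp
      rwa [this] at h
    have key : g₂ u = (g₁.trans g₂)
        ⟨((u:ℝ)+1)/2, ⟨by have := u.2.1; linarith, by have := u.2.2; linarith⟩⟩ := by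
      rw [Path.trans_apply]
      split_ifs with h
      · have h' : ((u:ℝ)+1)/2 ≤ 1/2 := h
        have hu0 : (u:ℝ) = 0 := le_antisymm (by linarith) u.2.1
        have e1 : g₂ u = b := by
          rw [show u = 0 from Subtype.ext (by simpa using hu0)]
          exact g₂.source
        rw [e1]
        exact (path_eq_target g₁ (show 2 * (((u:ℝ)+1)/2) = 1 by rw [hu0]; norm_num)).symm
      · exact path_congr' g₂ (show (u:ℝ) = 2 * (((u:ℝ)+1)/2) - 1 by ring)
    rw [key]
    refine hUsub ⟨p - 1 + j, by have := j.2; omega⟩ ⟨_, ⟨?_, ?_⟩, rfl⟩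
    · rw [← Subtype.coe_le_coe]
      have he : (t (Fin.castSucc ⟨p - 1 + (j:ℕ), by have := j.2; omega⟩) : ℝ)
          = tR (p - 1 + (j:ℕ)) := by
        rw [htReq (p - 1 + (j:ℕ)) (by have := j.2; omega)]
        rfl
      rw [he]
      show tR (p - 1 + (j:ℕ)) ≤ ((u:ℝ)+1)/2
      rcases Nat.eq_zero_or_pos (j:ℕ) with hj | hj
      · have h1 : tR (p - 1 + (j:ℕ)) ≤ 1/2 := by
          rw [hj]
          exact hp_le' (p - 1) (by omega)
        have := u.2.1
        linarith
      · have h := Subtype.coe_le_coe.mpr hu1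
        rw [hrval j.castSucc (by simpa using hj)] at h
        have he2 : tR (p - 1 + (j.castSucc : ℕ)) = tR (p - 1 + (j:ℕ)) := by simp
        rw [he2] at h
        linarith
    · rw [← Subtype.coe_le_coe]
      have he : (t (Fin.succ ⟨p - 1 + (j:ℕ), by have := j.2; omega⟩) : ℝ)
          = tR (p - 1 + (j:ℕ) + 1) := by
        rw [htReq (p - 1 + (j:ℕ) + 1) (by have := j.2; omega)]
        rfl
      rw [he]
      show ((u:ℝ)+1)/2 ≤ tR (p - 1 + (j:ℕ) + 1)
      have : p - 1 + ((j:ℕ)+1) = p - 1 + (j:ℕ) + 1 := by omega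
      rw [this] at hup
      linarith
  obtain ⟨γ₂, hγ₂sub, hγ₂eq, hγ₂hom⟩ :=
    h₂ m r hr0 hrlast hrmono W (fun j => hUopen _) hWsub
  -- the values property
  have hval : ∀ i : Fin (n+1), (γ₁.trans γ₂) (t i) = (g₁.trans g₂) (t i) := by
    intro i
    have hti : (t i : ℝ) = tR (i : ℕ) := (htReq (i:ℕ) i.2).symm.trans (by congr)
    rw [Path.trans_apply, Path.trans_apply]
    split_ifs with h
    · rcases lt_or_eq_of_le h with h' | h'
      · have hik : (i:ℕ) < k := by
          by_contra hik
          have := le_trans hk_half (htRmono (show k ≤ (i:ℕ) by omega))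
          rw [← hti] at this
          linarith
        refine path_congr (hγ₁eq ⟨(i:ℕ), by omega⟩) ?_
        rw [hsval ⟨(i:ℕ), by omega⟩ (by simpa using hik)]
        dsimp only
        rw [hti]
      · refine path_congr (v := 1) (by rw [γ₁.target, g₁.target]) ?_
        show 2 * ((t i : ℝ)) = ((1:I):ℝ)
        rw [h', Set.Icc.coe_one]
        norm_num
    · have hip : p ≤ (i:ℕ) := by
        by_contra h'
        have := hp_le' (i:ℕ) (by omega)
        rw [← hti] at this
        have h'' := lt_of_not_ge h
        linarith
      have hjm : (i:ℕ) - (p - 1) < m + 1 := by have := i.2; omega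
      refine path_congr (hγ₂eq ⟨(i:ℕ) - (p - 1), hjm⟩) ?_
      rw [hrval ⟨(i:ℕ) - (p - 1), hjm⟩ (by simp only []; omega)]
      dsimp only
      rw [show p - 1 + ((i:ℕ) - (p - 1)) = (i:ℕ) by omega, hti]
  refine ⟨γ₁.trans γ₂, ?_, hval, hγ₁hom.hcomp hγ₂hom⟩
  -- the pieces property
  rintro i _ ⟨u, ⟨hu1, hu2⟩, rfl⟩
  have hc1 : (t i.castSucc : ℝ) = tR (i:ℕ) := by
    rw [htReq (i:ℕ) (by omega)]
    congr
  have hc2 : (t i.succ : ℝ) = tR ((i:ℕ)+1) := by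
    rw [htReq ((i:ℕ)+1) (by omega)]
    congr
  have hu1' : tR (i:ℕ) ≤ (u:ℝ) := hc1 ▸ Subtype.coe_le_coe.mpr hu1
  have hu2' : (u:ℝ) ≤ tR ((i:ℕ)+1) := hc2 ▸ Subtype.coe_le_coe.mpr hu2
  by_cases h : (u:ℝ) ≤ 1/2
  · by_cases hik : (i:ℕ) < k
    · rw [Path.trans_apply, dif_pos h]
      refine hγ₁sub ⟨(i:ℕ), hik⟩ ⟨_, ⟨?_, ?_⟩, rfl⟩
      · rw [← Subtype.coe_le_coe, hsval (Fin.castSucc ⟨(i:ℕ), hik⟩) (by simpa using hik)]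
        show 2 * tR ((Fin.castSucc ⟨(i:ℕ), hik⟩ : Fin (k+1)) : ℕ) ≤ 2 * (u:ℝ)
        simp only [Fin.coe_castSucc]
        linarith
      · rw [← Subtype.coe_le_coe]
        show 2 * (u:ℝ) ≤ (s (Fin.succ ⟨(i:ℕ), hik⟩) : ℝ)
        rcases lt_or_ge ((i:ℕ)+1) k with hik1 | hik1
        · rw [hsval (Fin.succ ⟨(i:ℕ), hik⟩) (by simpa using hik1)]
          simp only [Fin.val_succ]
          linarith
        · rw [hsval1 (Fin.succ ⟨(i:ℕ), hik⟩) (by simp; omega)]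
          linarith
    · -- here u = 1/2 = t i.castSucc
      have h5 : (1:ℝ)/2 ≤ tR (i:ℕ) := le_trans hk_half (htRmono (by omega))
      have hu12 : u = t i.castSucc := Subtype.ext (by rw [hc1]; linarith)
      rw [hu12, hval i.castSucc]
      exact hUsub i ⟨t i.castSucc, ⟨le_refl _, le_of_lt (hmono (Fin.castSucc_lt_succ (i := i)))⟩, rfl⟩
  · -- u > 1/2
    have hnk : p - 1 ≤ (i:ℕ) := by
      by_contra h'
      have := hp_le' ((i:ℕ)+1) (by omega)
      linarith
    have hjm : (i:ℕ) - (p - 1) < m := by have := i.2; omega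
    have hWU : W ⟨(i:ℕ) - (p - 1), hjm⟩ = U i := by
      apply congrArg U
      apply Fin.ext
      show p - 1 + ((i:ℕ) - (p - 1)) = (i:ℕ)
      omega
    rw [Path.trans_apply, dif_neg h, ← hWU]
    refine hγ₂sub ⟨(i:ℕ) - (p - 1), hjm⟩ ⟨_, ⟨?_, ?_⟩, rfl⟩
    · rw [← Subtype.coe_le_coe]
      show (r (Fin.castSucc ⟨(i:ℕ) - (p - 1), hjm⟩) : ℝ) ≤ 2 * (u:ℝ) - 1
      rcases Nat.eq_zero_or_pos ((i:ℕ) - (p - 1)) with hj | hj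
      · rw [hrval0 (Fin.castSucc ⟨(i:ℕ) - (p - 1), hjm⟩) (by simp [hj])]
        have h'' := lt_of_not_ge h
        linarith
      · rw [hrval (Fin.castSucc ⟨(i:ℕ) - (p - 1), hjm⟩) (by simpa using hj)]
        simp only [Fin.coe_castSucc]
        rw [show p - 1 + ((i:ℕ) - (p - 1)) = (i:ℕ) by omega]
        linarith
    · rw [← Subtype.coe_le_coe]
      show 2 * (u:ℝ) - 1 ≤ (r (Fin.succ ⟨(i:ℕ) - (p - 1), hjm⟩) : ℝ)
      rw [hrval (Fin.succ ⟨(i:ℕ) - (p - 1), hjm⟩) (by simp)]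
      simp only [Fin.val_succ]
      rw [show p - 1 + ((i:ℕ) - (p - 1) + 1) = (i:ℕ) + 1 by omega]
      linarith

lemma HClose.refl' {a b : X} (f : Path a b) : HClose f f :=
  fun _ _ _ _ _ _ _ hsub => ⟨f, hsub, fun _ => rfl, Path.Homotopic.refl f⟩

lemma pathClass_eq_one_iff {x : X} (f : Path x x) :
    pathClass f = 1 ↔ f.Homotopic (Path.refl x) := by
  constructor
  · intro h
    have h2 : (⟦f⟧ : Path.Homotopic.Quotient x x) = ⟦Path.refl x⟧ := h
    exact Quotient.exact h2
  · intro h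
    have h2 : (⟦f⟧ : FundamentalGroupoid.mk x ⟶ FundamentalGroupoid.mk x) = ⟦Path.refl x⟧ :=
      Quotient.sound h
    exact h2

lemma pathClass_congr {x : X} {f g : Path x x} (h : f.Homotopic g) :
    pathClass f = pathClass g := by
  unfold pathClass; exact congrArg _ (Quotient.sound (s := Path.Homotopic.setoid x x) h)

open CategoryTheory FundamentalGroupoid in
lemma homotopic_of_conj {x a b : X} (c : Path x a) (f g : Path a b)
    (h : (c.trans ((f.trans g.symm).trans c.symm)).Homotopic (Path.refl x)) :
    f.Homotopic g := by
  have key : (⟦c⟧ : FundamentalGroupoid.mk x ⟶ FundamentalGroupoid.mk a) ≫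
      ((⟦f⟧ ≫ Groupoid.inv ⟦g⟧) ≫ Groupoid.inv ⟦c⟧) = 𝟙 (FundamentalGroupoid.mk x) := by
    have key0 : (⟦c.trans ((f.trans g.symm).trans c.symm)⟧ :
        FundamentalGroupoid.mk x ⟶ FundamentalGroupoid.mk x) = ⟦Path.refl x⟧ :=
      Quotient.sound h
    exact key0
  set C : FundamentalGroupoid.mk x ⟶ FundamentalGroupoid.mk a := ⟦c⟧ with hC
  set F : FundamentalGroupoid.mk a ⟶ FundamentalGroupoid.mk b := ⟦f⟧ with hF
  set G : FundamentalGroupoid.mk a ⟶ FundamentalGroupoid.mk b := ⟦g⟧ with hG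
  have h1 : F ≫ Groupoid.inv G = 𝟙 (FundamentalGroupoid.mk a) := by
    have h0 := congrArg (fun z => Groupoid.inv C ≫ z ≫ C) key
    simpa using h0
  have h2 : F = G := by
    have h0 := congrArg (fun z => z ≫ G) h1
    simpa using h0
  exact Quotient.exact h2

open CategoryTheory FundamentalGroupoid in
lemma conj_null {x a b : X} (c : Path x a) (g : Path a b) :
    (c.trans ((g.trans g.symm).trans c.symm)).Homotopic (Path.refl x) := by
  have key : (⟦c.trans ((g.trans g.symm).trans c.symm)⟧ :
      FundamentalGroupoid.mk x ⟶ FundamentalGroupoid.mk x) = ⟦Path.refl x⟧ := by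
    show (⟦c⟧ : FundamentalGroupoid.mk x ⟶ FundamentalGroupoid.mk a) ≫
        ((⟦g⟧ ≫ Groupoid.inv ⟦g⟧) ≫ Groupoid.inv ⟦c⟧) = 𝟙 (FundamentalGroupoid.mk x)
    simp
  exact Quotient.exact key

/-- for a path-connected space `X`, `π₁^qs(X, x) = 1` if and only if
whenever a path is homotopically close rel `∂I` to a path with the same endpoints,
the two paths are homotopic rel `∂I`. -/
theorem stmt19 [PathConnectedSpace X] (x : X) :
    qs x = {(1 : FundamentalGroup X x)} ↔
      ∀ (a b : X) (f g : Path a b), HClose f g → f.Homotopic g := by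
  constructor
  · intro hqs a b f g hfg
    obtain ⟨cp⟩ : Nonempty (Path x a) := ⟨(PathConnectedSpace.joined x a).somePath⟩
    have hF : HClose (cp.trans ((f.trans g.symm).trans cp.symm))
        (cp.trans ((g.trans g.symm).trans cp.symm)) :=
      (HClose.refl' cp).trans' (((hfg.trans' (HClose.refl' g.symm))).trans' (HClose.refl' cp.symm))
    have hmem : pathClass (cp.trans ((f.trans g.symm).trans cp.symm)) ∈ qs x := by
      refine ⟨_, cp.trans ((g.trans g.symm).trans cp.symm), rfl, ?_, hF⟩
      simp only [SetLike.mem_coe, Subgroup.mem_bot]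
      exact (pathClass_eq_one_iff _).mpr (conj_null cp g)
    rw [hqs, Set.mem_singleton_iff, pathClass_eq_one_iff] at hmem
    exact homotopic_of_conj cp f g hmem
  · intro h
    ext p
    simp only [Set.mem_singleton_iff]
    constructor
    · rintro ⟨f, hh, rfl, hmem, hcl⟩
      simp only [SetLike.mem_coe, Subgroup.mem_bot] at hmem
      have h1 : f.Homotopic hh := h x x f hh hcl
      rw [pathClass_congr h1]
      exact hmem
    · rintro rfl
      exact ⟨Path.refl x, Path.refl x,
        (pathClass_eq_one_iff _).mpr (Path.Homotopic.refl _),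
        by simp only [SetLike.mem_coe, Subgroup.mem_bot];
           exact (pathClass_eq_one_iff _).mpr (Path.Homotopic.refl _),
        HClose.refl' _⟩
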